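/- Let f : ℝ → ℝ be symmetric about 0 (f(x) = f(-x)), positive, decreasing on [0, ∞), and log-convex on [0, ∞). Then for any real Δ ≥ 0 and any x, x' with |x - x'| ≤ Δ, we have f(x)/f(x') ≤ f(0)/f(Δ). -/
import Mathlib


open Real Set

theorem stmt_0 (f : ℝ → ℝ)
    (hsymm : ∀ x, f x = f (-x))
    (hpos : ∀ x, 0 < f x)
    (hdec : AntitoneOn f (Ici 0))
    (hlc : ConvexOn ℝ (Ici 0) (fun x => Real.log (f x))) :
    ∀ Δ : ℝ, 0 ≤ Δ → ∀ x x' : ℝ, |x - x'| ≤ Δ →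
      f x / f x' ≤ f 0 / f Δ := by
  intro Δ hΔ x x' h
  have habs : ∀ y : ℝ, f y = f |y| := by
    intro y
    rcases abs_choice y with hy | hy
    · rw [hy]
    · rw [hy]; exact hsymm y
  rw [habs x, habs x']
  set a := |x| with ha'
  set b := |x'| with hb'
  have ha : (0:ℝ) ≤ a := abs_nonneg x
  have hb : (0:ℝ) ≤ b := abs_nonneg x'
  have hab : |a - b| ≤ Δ := le_trans (abs_abs_sub_abs_le_abs_sub x x') h
  rcases le_or_gt b a with hba | hba
  · -- easy case : f a ≤ f b, f Δ ≤ f 0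
    have h1 : f a / f b ≤ 1 := (div_le_one (hpos b)).mpr (hdec hb ha hba)
    have h2 : (1:ℝ) ≤ f 0 / f Δ :=
      (one_le_div (hpos Δ)).mpr (hdec self_mem_Ici hΔ hΔ)
    linarith
  · -- a < b, so 0 < b
    have hbpos : 0 < b := lt_of_le_of_lt ha hba
    have hbaΔ : b - a ≤ Δ := by
      have := abs_le.mp hab
      linarith [this.1]
    set t : ℝ := a / b with ht'
    have ht0 : 0 ≤ t := div_nonneg ha hb
    have ht1 : t ≤ 1 := (div_le_one hbpos).mpr hba.le
    have htb : t * b = a := div_mul_cancel₀ a hbpos.ne'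
    have hc1 := hlc.2 (self_mem_Ici (a := (0:ℝ))) (mem_Ici.mpr hb)
      (by linarith : (0:ℝ) ≤ 1 - t) ht0 (by ring)
    have hc2 := hlc.2 (self_mem_Ici (a := (0:ℝ))) (mem_Ici.mpr hb)
      ht0 (by linarith : (0:ℝ) ≤ 1 - t) (by ring)
    simp only [smul_eq_mul, mul_zero, zero_add] at hc1 hc2
    rw [htb] at hc1
    have heq : (1 - t) * b = b - a := by
      rw [sub_mul, one_mul, htb]
    rw [heq] at hc2
    -- g a + g (b - a) ≤ g 0 + g b
    have hsum : Real.log (f a) + Real.log (f (b - a)) ≤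
        Real.log (f 0) + Real.log (f b) := by
      have := add_le_add hc1 hc2
      nlinarith
    have hΔba : Real.log (f Δ) ≤ Real.log (f (b - a)) :=
      Real.log_le_log (hpos Δ) (hdec (mem_Ici.mpr (by linarith)) (mem_Ici.mpr hΔ) hbaΔ)
    have hkey : Real.log (f a * f Δ) ≤ Real.log (f 0 * f b) := by
      rw [Real.log_mul (hpos a).ne' (hpos Δ).ne',
        Real.log_mul (hpos 0).ne' (hpos b).ne']
      linarith
    have hmul : f a * f Δ ≤ f 0 * f b :=
      (Real.log_le_log_iff (mul_pos (hpos a) (hpos Δ))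
        (mul_pos (hpos 0) (hpos b))).mp hkey
    rw [div_le_div_iff₀ (hpos b) (hpos Δ)]
    linarith
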